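/- There is no finite non-nilpotent group G with a non-nilpotent proper subgroup H < G such that |G| - |nil(G)| = |H| - |nil(H)|. -/

import Mathlib

def nilizer {G : Type*} [Group G] (x : G) : Set G :=
  {g | Group.IsNilpotent (Subgroup.closure ({x, g} : Set G))}

def nilSet (G : Type*) [Group G] : Set G :=
  {x | ∀ y : G, Group.IsNilpotent (Subgroup.closure ({x, y} : Set G))}

open Subgroup

section Aux
variable {G : Type} [Group G]

lemma nilpotent_of_le {K L : Subgroup G} (h : K ≤ L) (hL : Group.IsNilpotent L) :
    Group.IsNilpotent K := by
  haveI := hL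
  exact nilpotent_of_mulEquiv (Subgroup.subgroupOfEquivOfLe h)

lemma mem_nilSet_of_zpowers {s u : G} (hs : s ∈ nilSet G) (hu : u ∈ Subgroup.zpowers s) :
    u ∈ nilSet G := by
  intro y
  refine nilpotent_of_le ?_ (hs y)
  refine (Subgroup.closure_le _).mpr ?_
  rintro g (rfl | rfl)
  · exact Subgroup.zpowers_le.mpr (Subgroup.subset_closure (by simp)) hu
  · exact Subgroup.subset_closure (by simp)

lemma mulEquiv_mem_nilSet (e : G ≃* G) {x : G} (hx : x ∈ nilSet G) : e x ∈ nilSet G := by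
  intro y
  haveI := hx (e.symm y)
  have hmap : (Subgroup.closure ({x, e.symm y} : Set G)).map e.toMonoidHom
      = Subgroup.closure {e x, y} := by
    rw [MonoidHom.map_closure]
    congr 1
    simp [Set.image_insert_eq]
  have h2 : Group.IsNilpotent ((Subgroup.closure ({x, e.symm y} : Set G)).map e.toMonoidHom) :=
    nilpotent_of_mulEquiv (Subgroup.equivMapOfInjective _ _ e.injective)
  rw [hmap] at h2
  exact h2

lemma mem_nilSet_subgroup {H : Subgroup G} {x : ↥H} (hx : (x : G) ∈ nilSet G) :
    x ∈ nilSet ↥H := by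
  intro y
  haveI := hx (y : G)
  have hmap : (Subgroup.closure ({x, y} : Set ↥H)).map H.subtype
      = Subgroup.closure {(x : G), (y : G)} := by
    rw [MonoidHom.map_closure]
    congr 1
    simp [Set.image_insert_eq]
  haveI h2 : Group.IsNilpotent ((Subgroup.closure ({x, y} : Set ↥H)).map H.subtype) := by
    rw [hmap]; exact hx (y : G)
  exact nilpotent_of_mulEquiv
    (Subgroup.equivMapOfInjective _ H.subtype H.subtype_injective).symm

lemma closure_compl_eq_top {H : Subgroup G} (h : H ≠ ⊤) :
    Subgroup.closure {g : G | g ∉ H} = ⊤ := by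
  obtain ⟨g₀, hg₀⟩ : ∃ g : G, g ∉ H := by
    by_contra hc
    push_neg at hc
    exact h ((Subgroup.eq_top_iff' H).mpr hc)
  rw [Subgroup.eq_top_iff']
  intro g
  by_cases hg : g ∈ H
  · have h1 : g * g₀ ∉ H := fun hm => hg₀ (by simpa using mul_mem (inv_mem hg) hm)
    have h2 : g = (g * g₀) * g₀⁻¹ := by group
    rw [h2]
    exact mul_mem (Subgroup.subset_closure h1) (inv_mem (Subgroup.subset_closure hg₀))
  · exact Subgroup.subset_closure hg

end Aux



lemma commute_of_coprime_aux :
    ∀ (n : ℕ) (K : Type) [Group K] [Finite K] [Group.IsNilpotent K],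
      Group.nilpotencyClass K ≤ n → ∀ x y : K,
      Nat.Coprime (orderOf x) (orderOf y) → Commute x y := by
  intro n
  induction n with
  | zero =>
    intro K _ _ _ h x y _
    haveI : Subsingleton K :=
      nilpotencyClass_zero_iff_subsingleton.mp (Nat.le_zero.mp h)
    exact Subsingleton.elim _ _
  | succ n ih =>
    intro K _ _ _ h x y hco
    have hQclass : Group.nilpotencyClass (K ⧸ Subgroup.center K) ≤ n := by
      rw [nilpotencyClass_quotient_center]
      omega
    have hcq : Commute ((QuotientGroup.mk' (Subgroup.center K)) x)
        ((QuotientGroup.mk' (Subgroup.center K)) y) :=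
      ih (K ⧸ Subgroup.center K) hQclass _ _
        (Nat.Coprime.coprime_dvd_left (orderOf_map_dvd _ x)
          (hco.coprime_dvd_right (orderOf_map_dvd _ y)))
    set z : K := x⁻¹ * y⁻¹ * x * y with hzdef
    have hzZ : z ∈ Subgroup.center K := by
      rw [← QuotientGroup.eq_one_iff]
      show (QuotientGroup.mk' (Subgroup.center K)) z = 1
      rw [hzdef]
      simp only [map_mul, map_inv]
      calc ((QuotientGroup.mk' (Subgroup.center K)) x)⁻¹
            * ((QuotientGroup.mk' (Subgroup.center K)) y)⁻¹
            * ((QuotientGroup.mk' (Subgroup.center K)) x)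
            * ((QuotientGroup.mk' (Subgroup.center K)) y)
          = (((QuotientGroup.mk' (Subgroup.center K)) y)
              * ((QuotientGroup.mk' (Subgroup.center K)) x))⁻¹
            * (((QuotientGroup.mk' (Subgroup.center K)) x)
              * ((QuotientGroup.mk' (Subgroup.center K)) y)) := by group
        _ = (((QuotientGroup.mk' (Subgroup.center K)) x)
              * ((QuotientGroup.mk' (Subgroup.center K)) y))⁻¹
            * (((QuotientGroup.mk' (Subgroup.center K)) x)
              * ((QuotientGroup.mk' (Subgroup.center K)) y)) := by rw [hcq.eq]
        _ = 1 := by group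
    have hzc : ∀ g : K, g * z = z * g := Subgroup.mem_center_iff.mp hzZ
    have hcomm : ∀ g : K, Commute z g := fun g => (hzc g).symm
    have h1 : x * y = y * x * z := by rw [hzdef]; group
    have h2 : x * y * x⁻¹ = y * z := by
      rw [h1]
      calc y * x * z * x⁻¹ = y * x * (z * x⁻¹) := by group
        _ = y * x * (x⁻¹ * z) := by rw [(hcomm x⁻¹).eq]
        _ = y * z := by group
    have hzy : z ^ orderOf y = 1 := by
      have h3 : (y * z) ^ orderOf y = y ^ orderOf y * z ^ orderOf y :=
        (hcomm y).symm.mul_pow _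
      have h4 : (x * y * x⁻¹) ^ orderOf y = x * y ^ orderOf y * x⁻¹ := conj_pow
      rw [h2, h3, pow_orderOf_eq_one] at h4
      simpa using h4
    have h5 : y * x * y⁻¹ = x * z⁻¹ := by
      have h6 : y * x = x * y * z⁻¹ := by rw [h1]; group
      rw [h6]
      calc x * y * z⁻¹ * y⁻¹ = x * y * (z⁻¹ * y⁻¹) := by group
        _ = x * y * (y⁻¹ * z⁻¹) := by rw [((hcomm y⁻¹).inv_left).eq]
        _ = x * z⁻¹ := by group
    have hzx : z ^ orderOf x = 1 := by
      have h3 : (x * z⁻¹) ^ orderOf x = x ^ orderOf x * (z⁻¹) ^ orderOf x :=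
        ((hcomm x).symm.inv_right).mul_pow _
      have h4 : (y * x * y⁻¹) ^ orderOf x = y * x ^ orderOf x * y⁻¹ := conj_pow
      rw [h5, h3, pow_orderOf_eq_one] at h4
      have h7 : (z⁻¹) ^ orderOf x = 1 := by simpa using h4
      rw [inv_pow] at h7
      simpa using inv_eq_one.mp h7
    have hz1 : z = 1 := by
      have hd : orderOf z ∣ Nat.gcd (orderOf x) (orderOf y) :=
        Nat.dvd_gcd (orderOf_dvd_of_pow_eq_one hzx) (orderOf_dvd_of_pow_eq_one hzy)
      rw [Nat.Coprime] at hco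
      rw [hco] at hd
      exact orderOf_eq_one_iff.mp (Nat.dvd_one.mp hd)
    rw [Commute, SemiconjBy, h1, hz1, mul_one]

lemma commute_of_coprime {K : Type} [Group K] [Finite K] [Group.IsNilpotent K]
    (x y : K) (h : Nat.Coprime (orderOf x) (orderOf y)) : Commute x y :=
  commute_of_coprime_aux (Group.nilpotencyClass K) K le_rfl x y h



lemma pPart_decomp {G : Type} [Group G] [Finite G] {p : ℕ} (hp : p.Prime) (s : G) :
    ∃ u v : G, s = u * v ∧ u ∈ Subgroup.zpowers s ∧ v ∈ Subgroup.zpowers s ∧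
      (∃ k : ℕ, u ^ p ^ k = 1) ∧ ¬ p ∣ orderOf v := by
  set n := orderOf s with hn
  have hn0 : n ≠ 0 := (orderOf_pos s).ne'
  set a : ℕ := p ^ n.factorization p with ha
  set b : ℕ := n / a with hb
  have hab : a * b = n := Nat.ordProj_mul_ordCompl_eq_self n p
  have hcop : Nat.Coprime p b := Nat.coprime_ordCompl hp hn0
  have hcoab : Nat.Coprime a b := Nat.Coprime.pow_left _ hcop
  obtain ⟨i, j, hij⟩ : IsCoprime (a : ℤ) (b : ℤ) := hcoab.isCoprime
  refine ⟨s ^ (j * (b : ℤ)), s ^ (i * (a : ℤ)), ?_, ⟨j * b, rfl⟩, ⟨i * a, rfl⟩, ?_, ?_⟩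
  · rw [← zpow_add]
    have : j * (b : ℤ) + i * (a : ℤ) = 1 := by linarith [hij]
    rw [this, zpow_one]
  · refine ⟨n.factorization p, ?_⟩
    rw [← ha, ← zpow_natCast (s ^ (j * (b:ℤ))) a, ← zpow_mul]
    have h9 : j * (b : ℤ) * a = (n : ℤ) * j := by
      push_cast [← hab]
      ring
    rw [h9, zpow_mul, zpow_natCast s n, hn, pow_orderOf_eq_one, one_zpow]
  · have hvb : (s ^ (i * (a : ℤ))) ^ b = 1 := by
      rw [← zpow_natCast (s ^ (i * (a:ℤ))) b, ← zpow_mul]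
      have h9 : i * (a : ℤ) * b = (n : ℤ) * i := by
        push_cast [← hab]
        ring
      rw [h9, zpow_mul, zpow_natCast s n, hn, pow_orderOf_eq_one, one_zpow]
    have hdvd : orderOf (s ^ (i * (a : ℤ))) ∣ b := orderOf_dvd_of_pow_eq_one hvb
    intro hpd
    exact (hp.coprime_iff_not_dvd.mp hcop) (hpd.trans hdvd)

lemma commute_of_nilSet_coprime {G : Type} [Group G] [Finite G]
    {c y : G} (hc : c ∈ nilSet G) (hco : Nat.Coprime (orderOf c) (orderOf y)) :
    Commute c y := by
  haveI hnil : Group.IsNilpotent (Subgroup.closure ({c, y} : Set G)) := hc y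
  have hcK : c ∈ Subgroup.closure ({c, y} : Set G) := Subgroup.subset_closure (by simp)
  have hyK : y ∈ Subgroup.closure ({c, y} : Set G) := Subgroup.subset_closure (by simp)
  set K : Subgroup G := Subgroup.closure ({c, y} : Set G) with hK
  set c' : ↥K := ⟨c, hcK⟩
  set y' : ↥K := ⟨y, hyK⟩
  have hoc : orderOf (K.subtype c') = orderOf c' := orderOf_injective K.subtype K.subtype_injective c'
  have hoy : orderOf (K.subtype y') = orderOf y' := orderOf_injective K.subtype K.subtype_injective y'
  have hcop : Nat.Coprime (orderOf c') (orderOf y') := by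
    rw [← hoc, ← hoy]
    exact hco
  have hcomm : Commute c' y' := commute_of_coprime c' y' hcop
  have h2 := congrArg (Subtype.val) hcomm.eq
  simpa [Commute, SemiconjBy] using h2

lemma coprime_of_p_p' {p a b : ℕ} (hp : p.Prime) (ha : a ∣ p ^ k) (hb : ¬ p ∣ b) :
    Nat.Coprime a b := by
  have h1 : Nat.Coprime p b := hp.coprime_iff_not_dvd.mpr hb
  exact ((h1.pow_left k).coprime_dvd_left ha)

lemma mem_sylow_of_nilSet {G : Type} [Group G] [Finite G] {p : ℕ} [hp : Fact p.Prime]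
    (P : Sylow p G) {u : G} (hu : u ∈ nilSet G) (huk : ∃ k : ℕ, u ^ p ^ k = 1) :
    u ∈ (P : Subgroup G) := by
  obtain ⟨k, hk⟩ := huk
  set W : Subgroup G := Subgroup.normalClosure {u} with hW
  haveI hWnormal : W.Normal := Subgroup.normalClosure_normal
  have hgen : ∀ c ∈ Group.conjugatesOfSet ({u} : Set G),
      c ∈ nilSet G ∧ c ^ p ^ k = 1 := by
    intro c hc
    rw [Group.mem_conjugatesOfSet_iff] at hc
    obtain ⟨a, ha, hconj⟩ := hc
    rw [Set.mem_singleton_iff] at ha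
    subst ha
    obtain ⟨g, hg⟩ := isConj_iff.mp hconj
    constructor
    · rw [← hg]; exact mulEquiv_mem_nilSet (MulAut.conj g) hu
    · rw [← hg, conj_pow, hk, mul_one, mul_inv_cancel]
  have hWcent : W ≤ Subgroup.centralizer {y : G | ¬ p ∣ orderOf y} := by
    have hsub : Group.conjugatesOfSet ({u} : Set G)
        ⊆ ↑(Subgroup.centralizer {y : G | ¬ p ∣ orderOf y}) := by
      intro c hc
      rw [SetLike.mem_coe, Subgroup.mem_centralizer_iff]
      intro y hy
      have hcy : Commute c y := commute_of_nilSet_coprime (hgen c hc).1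
        (coprime_of_p_p' hp.out (orderOf_dvd_of_pow_eq_one (hgen c hc).2) hy)
      exact hcy.symm.eq
    exact (Subgroup.closure_le _).mpr hsub
  have hcentW : ∀ y : ↥W, ¬ p ∣ orderOf y → y ∈ Subgroup.center ↥W := by
    intro y hy
    rw [Subgroup.mem_center_iff]
    intro w
    have h3 := orderOf_injective W.subtype W.subtype_injective y
    rw [← h3] at hy
    have hw := hWcent w.2
    rw [Subgroup.mem_centralizer_iff] at hw
    have h4 := hw (W.subtype y) hy
    exact Subtype.ext (by simpa using h4.symm)
  have hQpg : IsPGroup p (↥W ⧸ Subgroup.center ↥W) := by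
    intro q
    obtain ⟨g, rfl⟩ := QuotientGroup.mk_surjective q
    obtain ⟨a, b, hab, ha, hb, ⟨m, hm⟩, hbo⟩ := pPart_decomp hp.out g
    obtain ⟨i, hi⟩ := ha
    obtain ⟨j, hj⟩ := hb
    have hcab : Commute a b := by rw [← hi, ← hj]; exact Commute.zpow_zpow_self g i j
    refine ⟨m, ?_⟩
    have h1 : g ^ p ^ m = b ^ p ^ m := by
      rw [hab, hcab.mul_pow, hm, one_mul]
    have h2 : g ^ p ^ m ∈ Subgroup.center ↥W := by
      rw [h1]
      refine hcentW _ fun hd => hbo (hd.trans (orderOf_pow_dvd _))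
    rw [← QuotientGroup.mk_pow]
    exact (QuotientGroup.eq_one_iff _).mpr h2
  haveI hWnil : Group.IsNilpotent ↥W := of_quotient_center_nilpotent hQpg.isNilpotent
  obtain ⟨Q⟩ : Nonempty (Sylow p ↥W) := inferInstance
  have h4 : ∀ (q : ℕ) (_ : Fact q.Prime) (R : Sylow q ↥W), (↑R : Subgroup ↥W).Normal :=
    ((isNilpotent_of_finite_tfae (G := ↥W)).out 0 3).mp hWnil
  have hQnormal : (Q : Subgroup ↥W).Normal := h4 p hp Q
  haveI := Sylow.unique_of_normal Q hQnormal
  have hgenQ : ∀ c ∈ Group.conjugatesOfSet ({u} : Set G),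
      c ∈ (Q : Subgroup ↥W).map W.subtype := by
    intro c hc
    have hcW : c ∈ W := Subgroup.conjugatesOfSet_subset_normalClosure hc
    set c' : ↥W := ⟨c, hcW⟩
    have hc'p : IsPGroup p (Subgroup.zpowers c') := by
      rw [IsPGroup.iff_card]
      have hord : orderOf c' ∣ p ^ k := by
        apply orderOf_dvd_of_pow_eq_one
        exact Subtype.ext (by simpa using (hgen c hc).2)
      obtain ⟨m, hmk, hcard⟩ := (Nat.dvd_prime_pow hp.out).mp hord
      exact ⟨m, by rw [Nat.card_zpowers]; exact hcard⟩
    obtain ⟨R, hR⟩ := hc'p.exists_le_sylow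
    have hRQ : R = Q := Subsingleton.elim R Q
    rw [hRQ] at hR
    exact ⟨c', hR (Subgroup.mem_zpowers c'), rfl⟩
  have hWQ : (Q : Subgroup ↥W).map W.subtype = W := by
    apply le_antisymm (Subgroup.map_subtype_le _)
    have h5 : Subgroup.closure (Group.conjugatesOfSet ({u} : Set G))
        ≤ (Q : Subgroup ↥W).map W.subtype := (Subgroup.closure_le _).mpr hgenQ
    exact h5
  have hWp : IsPGroup p ↥W := by
    have h6 := Q.isPGroup'.map W.subtype
    rwa [hWQ] at h6
  have hsup : IsPGroup p ↥(W ⊔ (P : Subgroup G)) :=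
    IsPGroup.to_sup_of_normal_left hWp P.isPGroup'
  have hP : W ⊔ (P : Subgroup G) = P := P.3 hsup le_sup_right
  have huW : u ∈ W := Subgroup.subset_normalClosure rfl
  rw [← hP]
  exact Subgroup.mem_sup_left huW

lemma nilSet_mem_normalizer {G : Type} [Group G] [Finite G] {p : ℕ} [hp : Fact p.Prime]
    (P : Sylow p G) {s : G} (hs : s ∈ nilSet G) :
    s ∈ Subgroup.normalizer ((P : Subgroup G) : Set G) := by
  obtain ⟨w, v, hwv, hwz, hvz, hwk, hvo⟩ := pPart_decomp hp.out s
  have hwnil : w ∈ nilSet G := mem_nilSet_of_zpowers hs hwz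
  have hvnil : v ∈ nilSet G := mem_nilSet_of_zpowers hs hvz
  have hwP : w ∈ (P : Subgroup G) := mem_sylow_of_nilSet P hwnil hwk
  have hvN : v ∈ Subgroup.normalizer ((P : Subgroup G) : Set G) := by
    rw [Subgroup.mem_normalizer_iff]
    intro x
    constructor
    · intro hx
      obtain ⟨k, hk⟩ : ∃ k : ℕ, x ^ p ^ k = 1 := by
        obtain ⟨k, hk⟩ := P.isPGroup' ⟨x, hx⟩
        exact ⟨k, by simpa using congrArg Subtype.val hk⟩
      have hc : Commute v x := commute_of_nilSet_coprime hvnil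
        (coprime_of_p_p' hp.out (orderOf_dvd_of_pow_eq_one hk) hvo).symm
      rw [hc.eq]
      simpa using hx
    · intro hx
      obtain ⟨k, hk⟩ : ∃ k : ℕ, (v * x * v⁻¹) ^ p ^ k = 1 := by
        obtain ⟨k, hk⟩ := P.isPGroup' ⟨v * x * v⁻¹, hx⟩
        exact ⟨k, by simpa using congrArg Subtype.val hk⟩
      have hc : Commute v (v * x * v⁻¹) := commute_of_nilSet_coprime hvnil
        (coprime_of_p_p' hp.out (orderOf_dvd_of_pow_eq_one hk) hvo).symm
      have h2 : x = v * x * v⁻¹ :=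
        mul_left_cancel (a := v) (by rw [hc.eq]; group)
      rw [h2]
      exact hx
  rw [hwv]
  exact mul_mem (Subgroup.le_normalizer hwP) hvN

theorem stmt12 :
    ¬ ∃ (G : Type) (_ : Group G) (_ : Finite G) (H : Subgroup G),
      ¬ Group.IsNilpotent G ∧ H ≠ ⊤ ∧ ¬ Group.IsNilpotent H ∧
      Nat.card G - (nilSet G).ncard = Nat.card H - (nilSet H).ncard := by
  rintro ⟨G, _, _, H, hG, hHtop, hH, hcard⟩
  classical
  set C : Set G := (nilSet G)ᶜ with hC
  set CH : Set ↥H := (nilSet ↥H)ᶜ with hCH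
  have hD : (Subtype.val '' CH) ⊆ C := by
    rintro _ ⟨b, hb, rfl⟩ hmem
    exact hb (mem_nilSet_subgroup hmem)
  have h1 : (nilSet G).ncard + C.ncard = Nat.card G :=
    Set.ncard_add_ncard_compl _
  have h2 : (nilSet ↥H).ncard + CH.ncard = Nat.card ↥H :=
    Set.ncard_add_ncard_compl _
  have himg : (Subtype.val '' CH).ncard = CH.ncard :=
    Set.ncard_image_of_injective _ Subtype.val_injective
  have hCC : C.ncard ≤ (Subtype.val '' CH).ncard := by
    rw [himg]
    omega
  have hEq : Subtype.val '' CH = C := Set.eq_of_subset_of_ncard_le hD hCC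
  have hsubH : ∀ g : G, g ∉ H → g ∈ nilSet G := by
    intro g hg
    by_contra hc
    have hgC : g ∈ C := hc
    rw [← hEq] at hgC
    obtain ⟨b, _, rfl⟩ := hgC
    exact hg b.2
  apply hG
  have key : ∀ (p : ℕ) (_ : Fact p.Prime) (P : Sylow p G), (↑P : Subgroup G).Normal := by
    intro p hp P
    rw [← Subgroup.normalizer_eq_top_iff, eq_top_iff, ← closure_compl_eq_top hHtop]
    refine (Subgroup.closure_le _).mpr ?_
    intro g hg
    exact nilSet_mem_normalizer P (hsubH g hg)
  exact ((isNilpotent_of_finite_tfae (G := G)).out 3 0).mp key
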